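/- In the formal power series ring ℤ[[t, z_1, z_2]], writing z^α = z_1^{m_1} z_2^{m_2} for α = m_1α_1 + m_2α_2 in the positive root lattice of G_2, one has ∏_{α ∈ Φ⁺(G_2)} (1 − t·z^{α})·(1 − z^{α})^{-1} = Σ_{T ∈ 𝒯(∞)} (1 − t)^{seg(T)} · z^{−wt(T)}, where Φ⁺(G_2) = {α_1, α_1+α_2, 2α_1+α_2, 3α_1+α_2, 3α_1+2α_2, α_2} and the right-hand side is a well-defined formal power series because for each monomial only finitely many T ∈ 𝒯(∞) contribute. -/

import Mathlib

open MvPowerSeries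

/-- The variable `t` in `ℤ[[t, z_1, …, z_r]]`. -/
noncomputable def tvar (r : ℕ) : MvPowerSeries (Option (Fin r)) ℤ :=
  MvPowerSeries.X none

/-- The monomial `z^v = z_1^{v 1} ⋯ z_r^{v r}` in `ℤ[[t, z_1, …, z_r]]`. -/
noncomputable def zmon (r : ℕ) (v : Fin r → ℕ) : MvPowerSeries (Option (Fin r)) ℤ :=
  MvPowerSeries.monomial (R := ℤ) (Finsupp.equivFunOnFinite.symm fun o => Option.elim o 0 v) 1

/-- The marginally large tableaux `𝒯(∞)` of type `G_2`, each determined by its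
segment data `(ℓ_{1,2}, ℓ_{1,3}, ℓ_{1,0}, ℓ_{1,3̄}, ℓ_{1,2̄}, ℓ_{1,1̄}, ℓ_{2,3})`
with `ℓ_{1,0} ∈ {0,1}`. -/
structure TabG where
  l12 : ℕ
  l13 : ℕ
  l10 : ℕ
  l13b : ℕ
  l12b : ℕ
  l11b : ℕ
  l23 : ℕ
  l10_le : l10 ≤ 1

/-- The set of positive roots of `G_2`
(`α_1, α_1+α_2, 2α_1+α_2, 3α_1+α_2, 3α_1+2α_2, α_2`), in simple-root
coordinates. -/
def posRootsG : Finset (Fin 2 → ℕ) :=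
  {![1, 0], ![1, 1], ![2, 1], ![3, 1], ![3, 2], ![0, 1]}

/-- `Ξ(T)`, extended by zero to all vectors: `ℓ_{1,2}` at `α_1`, `ℓ_{1,3}` at
`α_1+α_2`, `2ℓ_{1,1̄} + ℓ_{1,0}` at `2α_1+α_2`, `ℓ_{1,3̄}` at `3α_1+α_2`,
`ℓ_{1,2̄}` at `3α_1+2α_2`, and `ℓ_{2,3}` at `α_2`. -/
def XiG (T : TabG) (v : Fin 2 → ℕ) : ℕ :=
  (if v = ![1, 0] then T.l12 else 0) +
    (if v = ![1, 1] then T.l13 else 0) +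
    (if v = ![2, 1] then 2 * T.l11b + T.l10 else 0) +
    (if v = ![3, 1] then T.l13b else 0) +
    (if v = ![3, 2] then T.l12b else 0) +
    (if v = ![0, 1] then T.l23 else 0)

/-- `seg′(T)`: the number of nonzero values among the seven segment data. -/
def segG' (T : TabG) : ℕ :=
  (if T.l12 ≠ 0 then 1 else 0) + (if T.l13 ≠ 0 then 1 else 0) +
    (if T.l10 ≠ 0 then 1 else 0) + (if T.l13b ≠ 0 then 1 else 0) +
    (if T.l12b ≠ 0 then 1 else 0) + (if T.l11b ≠ 0 then 1 else 0) +
    (if T.l23 ≠ 0 then 1 else 0)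

/-- `seg(T) = seg′(T) - 1` if the first row contains both a `0`-segment and a
`1̄`-segment, and `seg(T) = seg′(T)` otherwise. -/
def segG (T : TabG) : ℕ :=
  segG' T - (if T.l10 ≠ 0 ∧ T.l11b ≠ 0 then 1 else 0)

/-- `-wt(T) = Σ_α Ξ(T)(α)·α`, in simple-root coordinates. -/
def negwtG (T : TabG) : Fin 2 → ℕ :=
  ∑ v ∈ posRootsG, XiG T v • v

-- sum and product expansions
lemma sum_posRoots {M : Type*} [AddCommMonoid M] (F : (Fin 2 → ℕ) → M) :
    ∑ v ∈ posRootsG, F v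
      = F ![1,0] + (F ![1,1] + (F ![2,1] + (F ![3,1] + (F ![3,2] + F ![0,1])))) := by
  rw [show posRootsG = {![1, 0], ![1, 1], ![2, 1], ![3, 1], ![3, 2], ![0, 1]} from rfl]
  rw [Finset.sum_insert (by decide), Finset.sum_insert (by decide),
    Finset.sum_insert (by decide), Finset.sum_insert (by decide),
    Finset.sum_insert (by decide), Finset.sum_singleton]

lemma prod_posRoots {M : Type*} [CommMonoid M] (F : (Fin 2 → ℕ) → M) :
    ∏ v ∈ posRootsG, F v
      = F ![1,0] * (F ![1,1] * (F ![2,1] * (F ![3,1] * (F ![3,2] * (F ![0,1] * 1))))) := by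
  rw [show posRootsG = {![1, 0], ![1, 1], ![2, 1], ![3, 1], ![3, 2], ![0, 1]} from rfl]
  rw [Finset.prod_insert (by decide), Finset.prod_insert (by decide),
    Finset.prod_insert (by decide), Finset.prod_insert (by decide),
    Finset.prod_insert (by decide), Finset.prod_singleton, mul_one]

@[simp] lemma xi1 (T : TabG) : XiG T ![1,0] = T.l12 := by
  simp [XiG, show (![1,0] : Fin 2 → ℕ) ≠ ![1,1] from by decide,
    show (![1,0] : Fin 2 → ℕ) ≠ ![2,1] from by decide,
    show (![1,0] : Fin 2 → ℕ) ≠ ![3,1] from by decide,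
    show (![1,0] : Fin 2 → ℕ) ≠ ![3,2] from by decide,
    show (![1,0] : Fin 2 → ℕ) ≠ ![0,1] from by decide]

@[simp] lemma xi2 (T : TabG) : XiG T ![1,1] = T.l13 := by
  simp [XiG, show (![1,1] : Fin 2 → ℕ) ≠ ![1,0] from by decide,
    show (![1,1] : Fin 2 → ℕ) ≠ ![2,1] from by decide,
    show (![1,1] : Fin 2 → ℕ) ≠ ![3,1] from by decide,
    show (![1,1] : Fin 2 → ℕ) ≠ ![3,2] from by decide,
    show (![1,1] : Fin 2 → ℕ) ≠ ![0,1] from by decide]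

@[simp] lemma xi3 (T : TabG) : XiG T ![2,1] = 2 * T.l11b + T.l10 := by
  simp [XiG, show (![2,1] : Fin 2 → ℕ) ≠ ![1,0] from by decide,
    show (![2,1] : Fin 2 → ℕ) ≠ ![1,1] from by decide,
    show (![2,1] : Fin 2 → ℕ) ≠ ![3,1] from by decide,
    show (![2,1] : Fin 2 → ℕ) ≠ ![3,2] from by decide,
    show (![2,1] : Fin 2 → ℕ) ≠ ![0,1] from by decide]

@[simp] lemma xi4 (T : TabG) : XiG T ![3,1] = T.l13b := by
  simp [XiG, show (![3,1] : Fin 2 → ℕ) ≠ ![1,0] from by decide,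
    show (![3,1] : Fin 2 → ℕ) ≠ ![1,1] from by decide,
    show (![3,1] : Fin 2 → ℕ) ≠ ![2,1] from by decide,
    show (![3,1] : Fin 2 → ℕ) ≠ ![3,2] from by decide,
    show (![3,1] : Fin 2 → ℕ) ≠ ![0,1] from by decide]

@[simp] lemma xi5 (T : TabG) : XiG T ![3,2] = T.l12b := by
  simp [XiG, show (![3,2] : Fin 2 → ℕ) ≠ ![1,0] from by decide,
    show (![3,2] : Fin 2 → ℕ) ≠ ![1,1] from by decide,
    show (![3,2] : Fin 2 → ℕ) ≠ ![2,1] from by decide,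
    show (![3,2] : Fin 2 → ℕ) ≠ ![3,1] from by decide,
    show (![3,2] : Fin 2 → ℕ) ≠ ![0,1] from by decide]

@[simp] lemma xi6 (T : TabG) : XiG T ![0,1] = T.l23 := by
  simp [XiG, show (![0,1] : Fin 2 → ℕ) ≠ ![1,0] from by decide,
    show (![0,1] : Fin 2 → ℕ) ≠ ![1,1] from by decide,
    show (![0,1] : Fin 2 → ℕ) ≠ ![2,1] from by decide,
    show (![0,1] : Fin 2 → ℕ) ≠ ![3,1] from by decide,
    show (![0,1] : Fin 2 → ℕ) ≠ ![3,2] from by decide]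

lemma negwt_eq (T : TabG) : negwtG T
    = T.l12 • ![1,0] + (T.l13 • ![1,1] + ((2 * T.l11b + T.l10) • ![2,1]
      + (T.l13b • ![3,1] + (T.l12b • ![3,2] + T.l23 • ![0,1])))) := by
  rw [negwtG, sum_posRoots (fun v => XiG T v • v)]
  simp


-- the tableau built from a 6-tuple
def mkTab (k : ℕ × ℕ × ℕ × ℕ × ℕ × ℕ) : TabG :=
  ⟨k.1, k.2.1, k.2.2.1 % 2, k.2.2.2.1, k.2.2.2.2.1, k.2.2.1 / 2, k.2.2.2.2.2, by omega⟩

def ETab : (ℕ × ℕ × ℕ × ℕ × ℕ × ℕ) ≃ TabG where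
  toFun := mkTab
  invFun T := (T.l12, T.l13, 2 * T.l11b + T.l10, T.l13b, T.l12b, T.l23)
  left_inv k := by
    obtain ⟨a, b, c, d, e, f⟩ := k
    simp only [mkTab, Prod.mk.injEq]
    refine ⟨trivial, trivial, by omega, trivial⟩
  right_inv T := by
    obtain ⟨a, b, c, d, e, f, g, h⟩ := T
    simp only [mkTab, TabG.mk.injEq]
    refine ⟨trivial, trivial, by omega, trivial, trivial, by omega, trivial⟩

lemma ite_ne_min (a : ℕ) : (if a ≠ 0 then 1 else 0) = min a 1 := by
  rcases a with _ | a <;> simp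

lemma seg_eq (T : TabG) : segG T = min T.l12 1 + min T.l13 1
    + min (2 * T.l11b + T.l10) 1 + min T.l13b 1 + min T.l12b 1 + min T.l23 1 := by
  unfold segG segG'
  by_cases h : (T.l10 ≠ 0 ∧ T.l11b ≠ 0)
  · rw [if_pos h]; simp only [ite_ne_min]; omega
  · rw [if_neg h]; simp only [ite_ne_min]; omega

lemma seg_mkTab (k : ℕ × ℕ × ℕ × ℕ × ℕ × ℕ) :
    segG (mkTab k) = min k.1 1 + min k.2.1 1 + min k.2.2.1 1 + min k.2.2.2.1 1
      + min k.2.2.2.2.1 1 + min k.2.2.2.2.2 1 := by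
  rw [seg_eq]
  obtain ⟨a, b, c, d, e, f⟩ := k
  simp only [mkTab]
  omega

lemma negwt_mkTab (k : ℕ × ℕ × ℕ × ℕ × ℕ × ℕ) :
    negwtG (mkTab k) = k.1 • ![1,0] + (k.2.1 • ![1,1] + (k.2.2.1 • ![2,1]
      + (k.2.2.2.1 • ![3,1] + (k.2.2.2.2.1 • ![3,2] + k.2.2.2.2.2 • ![0,1])))) := by
  obtain ⟨a, b, c, d, e, f⟩ := k
  rw [negwt_eq]
  simp only [mkTab]
  rw [show 2 * (c / 2) + c % 2 = c from by omega]

abbrev PS := MvPowerSeries (Option (Fin 2)) ℤ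

noncomputable def emb (v : Fin 2 → ℕ) : Option (Fin 2) →₀ ℕ :=
  Finsupp.equivFunOnFinite.symm fun o => Option.elim o 0 v

@[simp] lemma emb_none (v : Fin 2 → ℕ) : emb v none = 0 := rfl
@[simp] lemma emb_some (v : Fin 2 → ℕ) (i : Fin 2) : emb v (some i) = v i := rfl

lemma zmon_eq (v : Fin 2 → ℕ) : zmon 2 v = MvPowerSeries.monomial (R := ℤ) (emb v) 1 := rfl

lemma emb_add (a b : Fin 2 → ℕ) : emb (a + b) = emb a + emb b := by
  ext x; cases x <;> simp

lemma emb_zero : emb 0 = 0 := by ext x; cases x <;> simp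

lemma emb_inj {a b : Fin 2 → ℕ} (h : emb a = emb b) : a = b := by
  funext i
  have := DFunLike.congr_fun h (some i)
  simpa using this

lemma emb_le_emb {a b : Fin 2 → ℕ} (h : ∀ i, a i ≤ b i) : emb a ≤ emb b := by
  rw [Finsupp.le_def]; intro x; cases x <;> simp [h]

def D (d : Option (Fin 2) →₀ ℕ) : ℕ := d (some 0) + d (some 1)

lemma D_add (a b : Option (Fin 2) →₀ ℕ) : D (a + b) = D a + D b := by
  simp [D]; ring

lemma D_emb (w : Fin 2 → ℕ) : D (emb w) = w 0 + w 1 := rfl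

lemma D_mono {a b : Option (Fin 2) →₀ ℕ} (h : a ≤ b) : D a ≤ D b := by
  have := Finsupp.le_def.1 h
  exact Nat.add_le_add (this _) (this _)

lemma zmon_mul (a b : Fin 2 → ℕ) : zmon 2 a * zmon 2 b = zmon 2 (a + b) := by
  rw [zmon_eq, zmon_eq, zmon_eq, monomial_mul_monomial, emb_add, one_mul]

-- sanity checks of names
example (e : Option (Fin 2) →₀ ℕ) (f : PS) : MvPowerSeries.coeff (R := ℤ) e f = f e := rfl
example : tvar 2 = MvPowerSeries.monomial (R := ℤ) (Finsupp.single none 1) 1 := rfl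
example (n : Option (Fin 2) →₀ ℕ) (p : (Option (Fin 2) →₀ ℕ) × (Option (Fin 2) →₀ ℕ))
    (h : p ∈ Finset.HasAntidiagonal.antidiagonal n) : p.1 + p.2 = n := Finset.HasAntidiagonal.mem_antidiagonal.1 h
example (a b : Option (Fin 2) →₀ ℕ) (h : b ≤ a) : a - b + b = a := tsub_add_cancel_of_le h

open scoped Classical

/-- one factor's expansion term -/
noncomputable def g (v : Fin 2 → ℕ) (k : ℕ) : PS :=
  (1 - tvar 2) ^ (min k 1) * zmon 2 (k • v)

/-- the geometric-like series `1 + (1-t)(z^v + z^{2v} + ⋯)` -/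
noncomputable def G (v : Fin 2 → ℕ) : PS := fun d =>
  (if d = 0 then (1 : ℤ) else 0)
    + (if ∃ k, 1 ≤ k ∧ d = emb (k • v) then 1 else 0)
    - (if ∃ k, 1 ≤ k ∧ d = Finsupp.single none 1 + emb (k • v) then 1 else 0)

lemma coeff_G (v : Fin 2 → ℕ) (d : Option (Fin 2) →₀ ℕ) :
    MvPowerSeries.coeff (R := ℤ) d (G v)
      = (if d = 0 then (1 : ℤ) else 0)
        + (if ∃ k, 1 ≤ k ∧ d = emb (k • v) then 1 else 0)
        - (if ∃ k, 1 ≤ k ∧ d = Finsupp.single none 1 + emb (k • v) then 1 else 0) := rfl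

lemma g_zero (v : Fin 2 → ℕ) : g v 0 = 1 := by
  rw [g, zero_smul]
  rw [show min 0 1 = 0 from rfl, pow_zero, one_mul, zmon_eq, emb_zero]
  rfl

lemma g_pos (v : Fin 2 → ℕ) (k : ℕ) (hk : 1 ≤ k) :
    g v k = MvPowerSeries.monomial (R := ℤ) (emb (k • v)) 1
      - MvPowerSeries.monomial (R := ℤ) (Finsupp.single none 1 + emb (k • v)) 1 := by
  rw [g, min_eq_right hk, pow_one, sub_mul, one_mul, zmon_eq]
  congr 1
  rw [show tvar 2 = MvPowerSeries.monomial (R := ℤ) (Finsupp.single none 1) 1 from rfl,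
    monomial_mul_monomial, one_mul]

lemma coeff_g (v : Fin 2 → ℕ) (k : ℕ) (d : Option (Fin 2) →₀ ℕ) :
    MvPowerSeries.coeff (R := ℤ) d (g v k)
      = (if k = 0 ∧ d = 0 then (1 : ℤ) else 0)
        + (if 1 ≤ k ∧ d = emb (k • v) then 1 else 0)
        - (if 1 ≤ k ∧ d = Finsupp.single none 1 + emb (k • v) then 1 else 0) := by
  rcases Nat.eq_zero_or_pos k with hk | hk
  · subst hk
    rw [g_zero, MvPowerSeries.coeff_one]
    simp
  · have hk1 : 1 ≤ k := hk
    have hk0 : ¬ (k = 0) := by omega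
    rw [g_pos v k hk1, map_sub, MvPowerSeries.coeff_monomial, MvPowerSeries.coeff_monomial]
    simp [hk0, hk1]

section
variable {v : Fin 2 → ℕ} (hv : 1 ≤ v 0 + v 1)

lemma smul_apply' (k : ℕ) (i : Fin 2) : (k • v) i = k * v i := rfl

include hv

lemma k_le_D {k : ℕ} {d : Option (Fin 2) →₀ ℕ} (h : d = emb (k • v)) : k ≤ D d := by
  subst h
  rw [D_emb, smul_apply', smul_apply']
  calc k = k * 1 := (mul_one k).symm
  _ ≤ k * (v 0 + v 1) := Nat.mul_le_mul_left k hv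
  _ = k * v 0 + k * v 1 := by ring

lemma k_le_D' {k : ℕ} {d : Option (Fin 2) →₀ ℕ}
    (h : d = Finsupp.single none 1 + emb (k • v)) : k ≤ D d := by
  subst h
  rw [D_add]
  exact le_trans (k_le_D hv rfl) (Nat.le_add_left _ _)

lemma smul_inj {k l : ℕ} (h : emb (k • v) = emb (l • v)) : k = l := by
  have h2 := emb_inj h
  have h0 := congrFun h2 0
  have h1 := congrFun h2 1
  rw [smul_apply', smul_apply'] at h0 h1
  rcases Nat.lt_or_ge (v 0) 1 with h | h
  · have hv1 : 1 ≤ v 1 := by omega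
    exact Nat.eq_of_mul_eq_mul_right (by omega) h1
  · exact Nat.eq_of_mul_eq_mul_right (by omega) h0

lemma L1 {d : Option (Fin 2) →₀ ℕ} {N : ℕ} (hd : D d ≤ N) :
    MvPowerSeries.coeff (R := ℤ) d (G v)
      = ∑ k ∈ Finset.range (N + 1), MvPowerSeries.coeff (R := ℤ) d (g v k) := by
  simp only [coeff_g, Finset.sum_add_distrib, Finset.sum_sub_distrib]
  rw [coeff_G]
  congr 1
  congr 1
  · by_cases h0 : d = 0
    · rw [if_pos h0, eq_comm,
        Finset.sum_eq_single 0 (fun b _ hb => if_neg fun hP => hb hP.1)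
          (fun hk => absurd (Finset.mem_range.2 (Nat.succ_pos N)) hk),
        if_pos ⟨rfl, h0⟩]
    · rw [if_neg h0, eq_comm]
      exact Finset.sum_eq_zero fun k _ => if_neg fun hP => h0 hP.2
  · by_cases h : ∃ k, 1 ≤ k ∧ d = emb (k • v)
    · obtain ⟨k0, hk1, hk2⟩ := h
      rw [if_pos ⟨k0, hk1, hk2⟩, eq_comm,
        Finset.sum_eq_single k0
          (fun b _ hb => if_neg fun hP => hb (smul_inj hv (hP.2.symm.trans hk2)))
          (fun hk => absurd (Finset.mem_range.2
            (Nat.lt_succ_of_le (le_trans (k_le_D hv hk2) hd))) hk),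
        if_pos ⟨hk1, hk2⟩]
    · rw [if_neg h, eq_comm]
      exact Finset.sum_eq_zero fun k _ => if_neg fun hP => h ⟨k, hP⟩
  · by_cases h : ∃ k, 1 ≤ k ∧ d = Finsupp.single none 1 + emb (k • v)
    · obtain ⟨k0, hk1, hk2⟩ := h
      have huniq : ∀ b, 1 ≤ b ∧ d = Finsupp.single none 1 + emb (b • v) → b = k0 := by
        intro b hP
        have := hP.2.symm.trans hk2
        exact smul_inj hv (add_left_cancel this)
      rw [if_pos ⟨k0, hk1, hk2⟩, eq_comm,
        Finset.sum_eq_single k0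
          (fun b _ hb => if_neg fun hP => hb (huniq b hP))
          (fun hk => absurd (Finset.mem_range.2
            (Nat.lt_succ_of_le (le_trans (k_le_D' hv hk2) hd))) hk),
        if_pos ⟨hk1, hk2⟩]
    · rw [if_neg h, eq_comm]
      exact Finset.sum_eq_zero fun k _ => if_neg fun hP => h ⟨k, hP⟩
end

section
variable {v : Fin 2 → ℕ} (hv : 1 ≤ v 0 + v 1)
include hv

lemma Lmove (e : Option (Fin 2) →₀ ℕ) (A B : PS) :
    MvPowerSeries.coeff (R := ℤ) e (A * (G v * B))
      = ∑ k ∈ Finset.range (D e + 1), MvPowerSeries.coeff (R := ℤ) e (A * (g v k * B)) := by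
  rw [show A * (G v * B) = G v * (A * B) from by ring, MvPowerSeries.coeff_mul]
  rw [Finset.sum_congr rfl (fun p hp => by
    rw [L1 hv (show D p.1 ≤ D e from by
      have := Finset.HasAntidiagonal.mem_antidiagonal.1 hp
      rw [← this, D_add]; exact Nat.le_add_right _ _), Finset.sum_mul])]
  rw [Finset.sum_comm]
  refine Finset.sum_congr rfl fun k _ => ?_
  rw [← MvPowerSeries.coeff_mul, show g v k * (A * B) = A * (g v k * B) from by ring]

lemma GmulOne : G v * (1 - zmon 2 v) = 1 - tvar 2 * zmon 2 v := by
  have hne1 : ∀ k, 1 ≤ k → emb (k • v) ≠ 0 := by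
    intro k hk h
    have h0 := DFunLike.congr_fun h (some 0)
    have h1 := DFunLike.congr_fun h (some 1)
    simp only [emb_some, Finsupp.coe_zero, Pi.zero_apply, smul_apply'] at h0 h1
    rcases Nat.mul_eq_zero.1 h0 with h' | h' <;>
      rcases Nat.mul_eq_zero.1 h1 with h'' | h'' <;> omega
  have hverr : emb v ≠ 0 := by
    have := hne1 1 (le_refl 1)
    rwa [one_smul] at this
  have hsn0 : ∀ w : Option (Fin 2) →₀ ℕ, Finsupp.single (none : Option (Fin 2)) 1 + w ≠ 0 := by
    intro w h
    have := DFunLike.congr_fun h none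
    simp at this
  ext d
  rw [show tvar 2 * zmon 2 v = MvPowerSeries.monomial (R := ℤ) (Finsupp.single none 1 + emb v) 1 from by
      rw [zmon_eq, show tvar 2 = MvPowerSeries.monomial (R := ℤ) (Finsupp.single none 1) 1 from rfl,
        monomial_mul_monomial, one_mul],
    mul_sub, mul_one, map_sub, map_sub, zmon_eq, MvPowerSeries.coeff_mul_monomial,
    MvPowerSeries.coeff_monomial, MvPowerSeries.coeff_one]
  by_cases hle : emb v ≤ d
  · have hd0 : d ≠ 0 := by
      intro h
      subst h
      exact hverr (le_antisymm (by simpa using hle) (zero_le))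
    rw [if_pos hle, mul_one]
    set c := d - emb v with hc
    have hdc : d = c + emb v := (tsub_add_cancel_of_le hle).symm
    have hiff2 : (∃ k, 1 ≤ k ∧ d = emb (k • v)) ↔
        (c = 0 ∨ ∃ k, 1 ≤ k ∧ c = emb (k • v)) := by
      constructor
      · rintro ⟨k, hk1, hk2⟩
        have hkk : k - 1 + 1 = k := by omega
        rw [hdc, ← hkk, succ_nsmul, emb_add] at hk2
        have hc' : c = emb ((k - 1) • v) := add_right_cancel hk2
        rcases Nat.lt_or_ge (k - 1) 1 with h1 | h1
        · left; rw [hc', show k - 1 = 0 from by omega, zero_smul, emb_zero]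
        · right; exact ⟨k - 1, h1, hc'⟩
      · rintro (h | ⟨k, hk1, hk2⟩)
        · exact ⟨1, le_refl 1, by rw [hdc, h, one_smul, zero_add]⟩
        · exact ⟨k + 1, by omega, by rw [hdc, hk2, succ_nsmul, emb_add]⟩
    have hiff3 : (∃ k, 1 ≤ k ∧ d = Finsupp.single none 1 + emb (k • v)) ↔
        (c = Finsupp.single none 1 ∨
          ∃ k, 1 ≤ k ∧ c = Finsupp.single none 1 + emb (k • v)) := by
      constructor
      · rintro ⟨k, hk1, hk2⟩
        have hkk : k - 1 + 1 = k := by omega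
        rw [hdc, ← hkk, succ_nsmul, emb_add, ← add_assoc] at hk2
        have hc' : c = Finsupp.single none 1 + emb ((k - 1) • v) := add_right_cancel hk2
        rcases Nat.lt_or_ge (k - 1) 1 with h1 | h1
        · left; rw [hc', show k - 1 = 0 from by omega, zero_smul, emb_zero, add_zero]
        · right; exact ⟨k - 1, h1, hc'⟩
      · rintro (h | ⟨k, hk1, hk2⟩)
        · exact ⟨1, le_refl 1, by rw [hdc, h, one_smul]⟩
        · exact ⟨k + 1, by omega, by rw [hdc, hk2, succ_nsmul, emb_add, add_assoc]⟩
    have h4 : (d = Finsupp.single none 1 + emb v) ↔ c = Finsupp.single none 1 := by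
      constructor
      · intro h
        apply add_right_cancel (b := emb v)
        rw [← hdc, h]
      · intro h
        rw [hdc, h]
    rw [coeff_G, coeff_G]
    simp only [hiff2, hiff3, h4]
    have hx1 : c = 0 → ¬ (∃ k, 1 ≤ k ∧ c = emb (k • v)) := by
      rintro h0 ⟨k, hk, hke⟩
      exact hne1 k hk (h0 ▸ hke).symm
    have hx2 : c = Finsupp.single none 1 →
        ¬ (∃ k, 1 ≤ k ∧ c = Finsupp.single none 1 + emb (k • v)) := by
      rintro hsn ⟨k, hk, hke⟩
      have h' : Finsupp.single (none : Option (Fin 2)) 1 + 0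
          = Finsupp.single none 1 + emb (k • v) := by
        rw [add_zero]
        exact hsn.symm.trans hke
      exact hne1 k hk (add_left_cancel h').symm
    by_cases hP0 : c = 0
    · have hP2 := hx1 hP0
      have hPsn : c ≠ Finsupp.single none 1 := by
        rw [hP0]
        intro h
        have := DFunLike.congr_fun h none
        simp at this
      have hP3 : ¬ (∃ k, 1 ≤ k ∧ c = Finsupp.single none 1 + emb (k • v)) := by
        rintro ⟨k, hk, hke⟩
        exact hsn0 _ (hP0 ▸ hke).symm
      rw [if_neg hd0, if_pos (Or.inl hP0), if_neg (fun h => h.elim hPsn hP3), if_pos hP0,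
        if_neg hP2, if_neg hP3, if_neg hPsn]
      norm_num
    · by_cases hPsn : c = Finsupp.single none 1
      · have hP3 := hx2 hPsn
        have hP2 : ¬ (∃ k, 1 ≤ k ∧ c = emb (k • v)) := by
          rintro ⟨k, hk, hke⟩
          have := DFunLike.congr_fun (hPsn.symm.trans hke) none
          simp at this
        rw [if_neg hd0, if_neg (fun h => h.elim hP0 hP2), if_pos (Or.inl hPsn), if_neg hP0,
          if_neg hP2, if_neg hP3, if_pos hPsn]
        norm_num
      · rw [if_neg hd0, if_neg hP0, if_neg hPsn]
        by_cases hP2 : (∃ k, 1 ≤ k ∧ c = emb (k • v)) <;>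
          by_cases hP3 : (∃ k, 1 ≤ k ∧ c = Finsupp.single none 1 + emb (k • v))
        · rw [if_pos (Or.inr hP2), if_pos (Or.inr hP3), if_pos hP2, if_pos hP3]; norm_num
        · rw [if_pos (Or.inr hP2), if_neg (fun h => h.elim hPsn hP3), if_pos hP2, if_neg hP3]
          norm_num
        · rw [if_neg (fun h => h.elim hP0 hP2), if_pos (Or.inr hP3), if_neg hP2, if_pos hP3]
          norm_num
        · rw [if_neg (fun h => h.elim hP0 hP2), if_neg (fun h => h.elim hPsn hP3), if_neg hP2,
            if_neg hP3]
          norm_num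
  · rw [if_neg hle]
    have h2 : ¬ (∃ k, 1 ≤ k ∧ d = emb (k • v)) := by
      rintro ⟨k, hk1, hk2⟩
      exact hle (hk2 ▸ emb_le_emb fun i => Nat.le_mul_of_pos_left _ hk1)
    have h3 : ¬ (∃ k, 1 ≤ k ∧ d = Finsupp.single none 1 + emb (k • v)) := by
      rintro ⟨k, hk1, hk2⟩
      refine hle (le_trans (emb_le_emb fun i => Nat.le_mul_of_pos_left _ hk1 :
        emb v ≤ emb (k • v)) ?_)
      rw [hk2]
      exact le_add_self
    have h4 : d ≠ Finsupp.single none 1 + emb v := by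
      intro h
      exact h3 ⟨1, le_refl 1, by rw [h, one_smul]⟩
    rw [coeff_G, if_neg h2, if_neg h3, if_neg h4, sub_zero, add_zero, sub_zero]
end

section
variable {v : Fin 2 → ℕ} (hv : 1 ≤ v 0 + v 1)
include hv

lemma constUnit : MvPowerSeries.constantCoeff (σ := Option (Fin 2)) (R := ℤ) (1 - zmon 2 v)
    = ((1 : ℤˣ) : ℤ) := by
  have hverr : emb v ≠ 0 := by
    intro h
    have h0 := DFunLike.congr_fun h (some 0)
    have h1 := DFunLike.congr_fun h (some 1)
    simp only [emb_some, Finsupp.coe_zero, Pi.zero_apply] at h0 h1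
    omega
  rw [map_sub, map_one, zmon_eq, ← MvPowerSeries.coeff_zero_eq_constantCoeff_apply,
    MvPowerSeries.coeff_monomial, if_neg (fun h => hverr h.symm), sub_zero, Units.val_one]

lemma fG : (1 - tvar 2 * zmon 2 v) * MvPowerSeries.invOfUnit (1 - zmon 2 v) 1 = G v := by
  calc (1 - tvar 2 * zmon 2 v) * MvPowerSeries.invOfUnit (1 - zmon 2 v) 1
      = (G v * (1 - zmon 2 v)) * MvPowerSeries.invOfUnit (1 - zmon 2 v) 1 := by
        rw [GmulOne hv]
  _ = G v * ((1 - zmon 2 v) * MvPowerSeries.invOfUnit (1 - zmon 2 v) 1) := mul_assoc _ _ _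
  _ = G v := by rw [MvPowerSeries.mul_invOfUnit _ _ (constUnit hv), mul_one]

end

lemma coeff_mul_zmon_zero (e : Option (Fin 2) →₀ ℕ) (P : PS) (w : Fin 2 → ℕ)
    (h : D e < w 0 + w 1) : MvPowerSeries.coeff (R := ℤ) e (P * zmon 2 w) = 0 := by
  rw [zmon_eq, MvPowerSeries.coeff_mul_monomial, if_neg]
  intro hle
  have := D_mono hle
  rw [D_emb] at this
  omega

lemma main_term (k : ℕ × ℕ × ℕ × ℕ × ℕ × ℕ) :
    (1 - tvar 2) ^ segG (mkTab k) * zmon 2 (negwtG (mkTab k))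
      = g ![1,0] k.1 * (g ![1,1] k.2.1 * (g ![2,1] k.2.2.1 * (g ![3,1] k.2.2.2.1
          * (g ![3,2] k.2.2.2.2.1 * (g ![0,1] k.2.2.2.2.2 * 1))))) := by
  rw [seg_mkTab, negwt_mkTab]
  simp only [g, ← zmon_mul]
  simp only [pow_add]
  ring

/-- the Gindikin–Karpelevich formula as a sum over the marginally
large tableaux `𝒯(∞)` of type `G_2`, stated coefficientwise in
`ℤ[[t, z_1, z_2]]`. -/
theorem stmt10 :
    ∀ e : Option (Fin 2) →₀ ℕ,
      MvPowerSeries.coeff (R := ℤ) e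
        (∏ v ∈ posRootsG, (1 - tvar 2 * zmon 2 v) *
          MvPowerSeries.invOfUnit (1 - zmon 2 v) 1)
      = ∑' T : TabG,
          MvPowerSeries.coeff (R := ℤ) e
            ((1 - tvar 2) ^ segG T * zmon 2 (negwtG T)) := by
  intro e
  -- hypotheses for the six roots
  have hv1 : 1 ≤ (![1,0] : Fin 2 → ℕ) 0 + ![1,0] 1 := by decide
  have hv2 : 1 ≤ (![1,1] : Fin 2 → ℕ) 0 + ![1,1] 1 := by decide
  have hv3 : 1 ≤ (![2,1] : Fin 2 → ℕ) 0 + ![2,1] 1 := by decide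
  have hv4 : 1 ≤ (![3,1] : Fin 2 → ℕ) 0 + ![3,1] 1 := by decide
  have hv5 : 1 ≤ (![3,2] : Fin 2 → ℕ) 0 + ![3,2] 1 := by decide
  have hv6 : 1 ≤ (![0,1] : Fin 2 → ℕ) 0 + ![0,1] 1 := by decide
  set R : Finset ℕ := Finset.range (D e + 1) with hR
  -- Right-hand side: reduce the tsum to a finite nested sum
  have rhs_eq : (∑' T : TabG, MvPowerSeries.coeff (R := ℤ) e
        ((1 - tvar 2) ^ segG T * zmon 2 (negwtG T)))
      = ∑ k1 ∈ R, ∑ k2 ∈ R, ∑ k3 ∈ R, ∑ k4 ∈ R, ∑ k5 ∈ R, ∑ k6 ∈ R,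
          MvPowerSeries.coeff (R := ℤ) e ((1 - tvar 2) ^ segG (mkTab (k1, k2, k3, k4, k5, k6))
            * zmon 2 (negwtG (mkTab (k1, k2, k3, k4, k5, k6)))) := by
    rw [← Equiv.tsum_eq ETab (fun T => MvPowerSeries.coeff (R := ℤ) e
      ((1 - tvar 2) ^ segG T * zmon 2 (negwtG T)))]
    rw [tsum_eq_sum (s := R ×ˢ (R ×ˢ (R ×ˢ (R ×ˢ (R ×ˢ R)))))
      (f := fun k => MvPowerSeries.coeff (R := ℤ) e
        ((1 - tvar 2) ^ segG (ETab k) * zmon 2 (negwtG (ETab k)))) ?_]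
    · rw [Finset.sum_product]
      refine Finset.sum_congr rfl fun k1 _ => ?_
      rw [Finset.sum_product]
      refine Finset.sum_congr rfl fun k2 _ => ?_
      rw [Finset.sum_product]
      refine Finset.sum_congr rfl fun k3 _ => ?_
      rw [Finset.sum_product]
      refine Finset.sum_congr rfl fun k4 _ => ?_
      rw [Finset.sum_product]
      refine Finset.sum_congr rfl fun k5 _ => ?_
      rfl
    · intro k hk
      obtain ⟨k1, k2, k3, k4, k5, k6⟩ := k
      apply coeff_mul_zmon_zero
      have hw := negwt_mkTab (k1, k2, k3, k4, k5, k6)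
      have h0 := congrFun hw 0
      have h1 := congrFun hw 1
      simp only [Pi.add_apply, Pi.smul_apply, smul_eq_mul, Matrix.cons_val_zero,
        Matrix.cons_val_one, Matrix.head_cons] at h0 h1
      show D e < negwtG (ETab (k1, k2, k3, k4, k5, k6)) 0
        + negwtG (ETab (k1, k2, k3, k4, k5, k6)) 1
      simp only [Finset.mem_product, Finset.mem_range, hR, not_and_or, not_lt] at hk
      show D e < negwtG (mkTab (k1, k2, k3, k4, k5, k6)) 0
        + negwtG (mkTab (k1, k2, k3, k4, k5, k6)) 1
      rw [h0, h1]
      omega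
  rw [rhs_eq]
  -- Left-hand side
  rw [prod_posRoots (fun v => (1 - tvar 2 * zmon 2 v) *
    MvPowerSeries.invOfUnit (1 - zmon 2 v) 1)]
  rw [fG hv1, fG hv2, fG hv3, fG hv4, fG hv5, fG hv6]
  rw [← one_mul (G ![1,0] * (G ![1,1] * (G ![2,1] * (G ![3,1] * (G ![3,2] * (G ![0,1] * 1)))))),
    Lmove hv1 e]
  refine Finset.sum_congr rfl fun k1 _ => ?_
  rw [← mul_assoc, Lmove hv2 e]
  refine Finset.sum_congr rfl fun k2 _ => ?_
  rw [← mul_assoc, Lmove hv3 e]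
  refine Finset.sum_congr rfl fun k3 _ => ?_
  rw [← mul_assoc, Lmove hv4 e]
  refine Finset.sum_congr rfl fun k4 _ => ?_
  rw [← mul_assoc, Lmove hv5 e]
  refine Finset.sum_congr rfl fun k5 _ => ?_
  rw [← mul_assoc, Lmove hv6 e]
  refine Finset.sum_congr rfl fun k6 _ => ?_
  rw [main_term (k1, k2, k3, k4, k5, k6)]
  congr 1
  ring
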